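/- The minimizer of max_{x∈[1,n]} |p(x)| over polynomials p of degree at most d with p(0) = 1 is unique. -/

import Mathlib

open Polynomial

/-- sup of |r| over `[1,n]`. -/
noncomputable def supOn (n : ℝ) (r : Polynomial ℝ) : ℝ :=
  sSup ((fun x => |r.eval x|) '' Set.Icc 1 n)

lemma poly_sSup_isGreatest (K : Set ℝ) (hK : IsCompact K) (hne : K.Nonempty)
    (r : Polynomial ℝ) :
    IsGreatest ((fun x => |r.eval x|) '' K) (sSup ((fun x => |r.eval x|) '' K)) := by
  obtain ⟨x₀, hx₀⟩ := (hK.image (r.continuous.abs)).exists_isGreatest (hne.image _)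
  rwa [hx₀.csSup_eq]

lemma supOn_isGreatest (n : ℝ) (hn : 1 ≤ n) (r : Polynomial ℝ) :
    IsGreatest ((fun x => |r.eval x|) '' Set.Icc 1 n) (supOn n r) :=
  poly_sSup_isGreatest _ isCompact_Icc (Set.nonempty_Icc.2 hn) r

lemma le_supOn (n : ℝ) (hn : 1 ≤ n) (r : Polynomial ℝ) {x : ℝ}
    (hx : x ∈ Set.Icc (1:ℝ) n) : |r.eval x| ≤ supOn n r :=
  (supOn_isGreatest n hn r).2 ⟨x, hx, rfl⟩

lemma exists_eq_supOn (n : ℝ) (hn : 1 ≤ n) (r : Polynomial ℝ) :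
    ∃ x ∈ Set.Icc (1:ℝ) n, |r.eval x| = supOn n r := by
  obtain ⟨x, hx, hx'⟩ := (supOn_isGreatest n hn r).1
  exact ⟨x, hx, hx'⟩

lemma supOn_le (n : ℝ) (hn : 1 ≤ n) (r : Polynomial ℝ) {c : ℝ}
    (h : ∀ x ∈ Set.Icc (1:ℝ) n, |r.eval x| ≤ c) : supOn n r ≤ c := by
  apply csSup_le ((Set.nonempty_Icc.2 hn).image _)
  rintro y ⟨x, hx, rfl⟩
  exact h x hx

/-- Uniqueness of the minimizer of the sup norm on `[1,n]` over polynomials of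
degree at most `d` with `p(0) = 1`. -/
theorem stmt9 (n : ℝ) (hn : 1 < n) (d : ℕ) (p q : Polynomial ℝ)
    (hp : p.natDegree ≤ d) (hq : q.natDegree ≤ d)
    (hp0 : p.eval 0 = 1) (hq0 : q.eval 0 = 1)
    (hpmin : ∀ r : Polynomial ℝ, r.natDegree ≤ d → r.eval 0 = 1 →
      sSup ((fun x => |p.eval x|) '' Set.Icc 1 n)
        ≤ sSup ((fun x => |r.eval x|) '' Set.Icc 1 n))
    (hqmin : ∀ r : Polynomial ℝ, r.natDegree ≤ d → r.eval 0 = 1 →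
      sSup ((fun x => |q.eval x|) '' Set.Icc 1 n)
        ≤ sSup ((fun x => |r.eval x|) '' Set.Icc 1 n)) :
    p = q := by
  have hn1 : (1:ℝ) ≤ n := hn.le
  have hpmin' : ∀ r : Polynomial ℝ, r.natDegree ≤ d → r.eval 0 = 1 →
      supOn n p ≤ supOn n r := hpmin
  have hqmin' : ∀ r : Polynomial ℝ, r.natDegree ≤ d → r.eval 0 = 1 →
      supOn n q ≤ supOn n r := hqmin
  set M : ℝ := supOn n p with hMdef
  have hMq : supOn n q = M := le_antisymm (hqmin' p hp hp0) (hpmin' q hq hq0)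
  -- the midpoint polynomial
  set f : Polynomial ℝ := Polynomial.C (2⁻¹ : ℝ) * (p + q) with hfdef
  have hfd : f.natDegree ≤ d :=
    le_trans (natDegree_C_mul_le _ _) (le_trans (natDegree_add_le p q) (max_le hp hq))
  have hfeval : ∀ x : ℝ, f.eval x = (p.eval x + q.eval x) / 2 := by
    intro x; simp [hfdef]; ring
  have hf0 : f.eval 0 = 1 := by rw [hfeval, hp0, hq0]; norm_num
  have hfle : ∀ x ∈ Set.Icc (1:ℝ) n, |f.eval x| ≤ M := by
    intro x hx
    have h1 := le_supOn n hn1 p hx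
    have h2 := (le_supOn n hn1 q hx).trans hMq.le
    have h3 := abs_add_le (p.eval x) (q.eval x)
    rw [hfeval, abs_div, abs_two]
    rw [← hMdef] at h1
    linarith
  have hMf : supOn n f = M := le_antisymm (supOn_le n hn1 f hfle) (hpmin' f hfd hf0)
  have hIccInf : (Set.Icc (1:ℝ) n).Infinite := by
    have := Set.Icc.infinite hn
    exact Set.infinite_coe_iff.mp this
  have hMpos : 0 < M := by
    rcases lt_or_ge 0 M with h | h
    · exact h
    exfalso
    have hp0' : p = 0 := by
      apply Polynomial.eq_zero_of_infinite_isRoot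
      apply hIccInf.mono
      intro x hx
      have h1 := le_supOn n hn1 p hx
      rw [← hMdef] at h1
      have : |p.eval x| ≤ 0 := h1.trans h
      simpa [Polynomial.IsRoot] using abs_nonpos_iff.mp this
    rw [hp0'] at hp0; simp at hp0
  clear_value M
  set A : Set ℝ := {x ∈ Set.Icc (1:ℝ) n | |f.eval x| = M} with hAdef
  obtain ⟨x₀, hx₀Icc, hx₀⟩ := exists_eq_supOn n hn1 f
  have hfx₀ : |f.eval x₀| = M := by rw [hx₀, hMf]
  have hx₀A : x₀ ∈ A := ⟨hx₀Icc, hfx₀⟩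
  have hpq_on : ∀ x ∈ A, p.eval x = q.eval x := by
    rintro x ⟨hx, hfx⟩
    have h1 : |p.eval x| ≤ M := by have := le_supOn n hn1 p hx; rwa [← hMdef] at this
    have h2 : |q.eval x| ≤ M := (le_supOn n hn1 q hx).trans hMq.le
    rw [hfeval, abs_div, abs_two] at hfx
    rcases abs_le.mp h1 with ⟨a1, a2⟩
    rcases abs_le.mp h2 with ⟨b1, b2⟩
    rcases abs_cases (p.eval x + q.eval x) with ⟨e, _⟩ | ⟨e, _⟩ <;> linarith
  clear_value f
  by_cases hbig : ∃ t : Finset ℝ, ↑t ⊆ A ∧ d + 1 ≤ t.card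
  · obtain ⟨t, hts, htc⟩ := hbig
    have hz : p - q = 0 := by
      apply Polynomial.eq_zero_of_natDegree_lt_card_of_eval_eq_zero' (p - q) t
      · intro i hi
        simp [hpq_on i (hts hi)]
      · have := le_trans (Polynomial.natDegree_sub_le p q) (max_le hp hq)
        omega
    exact sub_eq_zero.mp hz
  · exfalso
    push_neg at hbig
    have hAfin : A.Finite := by
      by_contra hinf
      obtain ⟨t, h1, h2⟩ := Set.Infinite.exists_subset_card_eq hinf (d+1)
      exact absurd h2.ge (not_le.mpr (hbig t h1))
    set t : Finset ℝ := hAfin.toFinset with htdef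
    have htA : ↑t = A := hAfin.coe_toFinset
    have htsub : ↑t ⊆ A := htA.subset
    have htcard : t.card ≤ d := by
      have := hbig t htsub
      omega
    have htne : t.Nonempty := ⟨x₀, hAfin.mem_toFinset.mpr hx₀A⟩
    classical
    set g : Polynomial ℝ := Lagrange.interpolate t id (fun x => f.eval x / x) with hgdef
    set h : Polynomial ℝ := Polynomial.X * g with hhdef
    have hgeval : ∀ x ∈ t, g.eval x = f.eval x / x := by
      intro x hx
      rw [hgdef]; exact Lagrange.eval_interpolate_at_node (fun x => f.eval x / x)
        Function.injective_id.injOn hx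
    have hheval : ∀ x ∈ A, h.eval x = f.eval x := by
      intro x hxA
      have hx1 : (1:ℝ) ≤ x := hxA.1.1
      have hx0 : x ≠ 0 := by linarith
      have hxt : x ∈ t := hAfin.mem_toFinset.mpr hxA
      rw [hhdef, Polynomial.eval_mul, Polynomial.eval_X, hgeval x hxt]
      field_simp
    have hhd : h.natDegree ≤ d := by
      have hdeg := Lagrange.degree_interpolate_lt (s := t) (v := id)
        (fun x => f.eval x / x) Function.injective_id.injOn
      have hgnat : g.natDegree < t.card := by
        by_cases hg0 : g = 0
        · rw [hg0]; simpa using htne.card_pos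
        · exact (Polynomial.natDegree_lt_iff_degree_lt hg0).mpr hdeg
      have h1 : h.natDegree ≤ X.natDegree + g.natDegree := Polynomial.natDegree_mul_le
      have h2 : (X : Polynomial ℝ).natDegree = 1 := Polynomial.natDegree_X
      omega
    have hh0 : h.eval 0 = 0 := by simp [hhdef]
    clear_value g h t
    clear hgdef hgeval htdef hhdef hAfin
    set Ch : ℝ := supOn n h with hChdef
    have hMCh : M ≤ Ch := by
      have h1 : |h.eval x₀| = M := by rw [hheval x₀ hx₀A, hfx₀]
      have h2 := le_supOn n hn1 h hx₀Icc
      rw [h1] at h2; exact h2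
    have hChpos : 0 < Ch := lt_of_lt_of_le hMpos hMCh
    clear_value Ch
    set B : Set ℝ := Set.Icc (1:ℝ) n ∩ {x | f.eval x * h.eval x ≤ M^2/2} with hBdef
    have hBcomp : IsCompact B :=
      isCompact_Icc.inter_right (isClosed_le ((f.continuous).mul (h.continuous)) continuous_const)
    have hM₁ex : ∃ M₁ : ℝ, 0 ≤ M₁ ∧ M₁ < M ∧ ∀ x ∈ B, |f.eval x| ≤ M₁ := by
      rcases Set.eq_empty_or_nonempty B with hB | hB
      · exact ⟨0, le_refl 0, hMpos, by simp [hB]⟩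
      · obtain ⟨hmem, hubB⟩ := poly_sSup_isGreatest B hBcomp hB f
        obtain ⟨x₁, hx₁B, hx₁⟩ := hmem
        refine ⟨sSup ((fun x => |f.eval x|) '' B), ?_, ?_, fun x hx => hubB ⟨x, hx, rfl⟩⟩
        · rw [← hx₁]; exact abs_nonneg _
        · rw [← hx₁]
          have hle : |f.eval x₁| ≤ M := hfle x₁ hx₁B.1
          rcases hle.lt_or_eq with hlt | heq
          · exact hlt
          · exfalso
            have hx₁A : x₁ ∈ A := ⟨hx₁B.1, heq⟩
            have e1 : f.eval x₁ * h.eval x₁ = M^2 := by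
              rw [hheval x₁ hx₁A, ← sq, ← sq_abs, heq]
            have e2 := hx₁B.2
            rw [Set.mem_setOf_eq, e1] at e2
            nlinarith
    obtain ⟨M₁, hM₁0, hM₁lt, hM₁ub⟩ := hM₁ex
    set ε : ℝ := min ((M - M₁)/(2*Ch)) (min (M^2/(2*Ch^2)) 1) with hεdef
    have hε0 : 0 < ε := by
      apply lt_min
      · apply div_pos (by linarith) (by linarith)
      · exact lt_min (div_pos (by positivity) (by positivity)) one_pos
    have hεa : ε ≤ (M - M₁)/(2*Ch) := min_le_left _ _
    have hεb : ε ≤ M^2/(2*Ch^2) := le_trans (min_le_right _ _) (min_le_left _ _)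
    have hεle1 : ε ≤ 1 := le_trans (min_le_right _ _) (min_le_right _ _)
    have hεCh : ε * Ch ≤ (M - M₁)/2 := by
      have h1 : ε * Ch ≤ (M - M₁)/(2*Ch) * Ch :=
        mul_le_mul_of_nonneg_right hεa hChpos.le
      have h2 : (M - M₁)/(2*Ch) * Ch = (M - M₁)/2 := by
        field_simp
      linarith
    have hεCh2 : ε * Ch^2 ≤ M^2/2 := by
      have h1 : ε * Ch^2 ≤ M^2/(2*Ch^2) * Ch^2 :=
        mul_le_mul_of_nonneg_right hεb (by positivity)
      have h2 : M^2/(2*Ch^2) * Ch^2 = M^2/2 := by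
        field_simp
      linarith
    clear_value ε
    set r' : Polynomial ℝ := f - Polynomial.C ε * h with hr'def
    have hr'eval : ∀ x : ℝ, r'.eval x = f.eval x - ε * h.eval x := by
      intro x; simp [hr'def]
    have hr'd : r'.natDegree ≤ d :=
      le_trans (Polynomial.natDegree_sub_le _ _)
        (max_le hfd (le_trans (natDegree_C_mul_le _ _) hhd))
    have hr'0 : r'.eval 0 = 1 := by rw [hr'eval, hf0, hh0]; ring
    clear_value r'
    set M' : ℝ := max ((M + M₁)/2) (Real.sqrt (M^2 - ε*M^2/2)) with hM'def
    clear_value M'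
    have hsq0 : 0 ≤ M^2 - ε*M^2/2 := by nlinarith [sq_nonneg M]
    have hM'lt : M' < M := by
      rw [hM'def]
      apply max_lt
      · linarith
      · have hpos : 0 < ε * M^2/2 := by positivity
        have h1 : M^2 - ε*M^2/2 < M^2 := by linarith
        calc Real.sqrt (M^2 - ε*M^2/2) < Real.sqrt (M^2) := Real.sqrt_lt_sqrt hsq0 h1
          _ = M := Real.sqrt_sq hMpos.le
    have key : ∀ x ∈ Set.Icc (1:ℝ) n, |r'.eval x| ≤ M' := by
      intro x hx
      rw [hr'eval, hM'def]
      have hhx : |h.eval x| ≤ Ch := by rw [hChdef]; exact le_supOn n hn1 h hx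
      have hfx : |f.eval x| ≤ M := hfle x hx
      by_cases hxB : f.eval x * h.eval x ≤ M^2/2
      · have h1 : |f.eval x| ≤ M₁ := hM₁ub x ⟨hx, hxB⟩
        have h2 : |f.eval x - ε * h.eval x| ≤ |f.eval x| + ε * |h.eval x| := by
          calc |f.eval x - ε * h.eval x| ≤ |f.eval x| + |ε * h.eval x| := abs_sub _ _
            _ = |f.eval x| + ε * |h.eval x| := by rw [abs_mul, abs_of_pos hε0]
        refine le_trans ?_ (le_max_left _ _)
        have h3 : ε * |h.eval x| ≤ ε * Ch := mul_le_mul_of_nonneg_left hhx hε0.le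
        linarith
      · push_neg at hxB
        refine le_trans ?_ (le_max_right _ _)
        rw [← Real.sqrt_sq (abs_nonneg (f.eval x - ε * h.eval x)), sq_abs]
        apply Real.sqrt_le_sqrt
        have e1 : (f.eval x)^2 ≤ M^2 := by
          rw [← sq_abs]; exact pow_le_pow_left₀ (abs_nonneg _) hfx 2
        have e2 : (h.eval x)^2 ≤ Ch^2 := by
          rw [← sq_abs]; exact pow_le_pow_left₀ (abs_nonneg _) hhx 2
        have e5 : ε^2 * (h.eval x)^2 ≤ ε^2 * Ch^2 :=
          mul_le_mul_of_nonneg_left e2 (sq_nonneg ε)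
        have e7 : ε * (ε * Ch^2) ≤ ε * (M^2/2) := mul_le_mul_of_nonneg_left hεCh2 hε0.le
        have e8 : ε * (M^2/2) ≤ ε * (f.eval x * h.eval x) :=
          mul_le_mul_of_nonneg_left hxB.le hε0.le
        have e9 : ε^2 * (h.eval x)^2 ≤ ε * (M^2/2) := by
          have hring : ε^2 * Ch^2 = ε * (ε * Ch^2) := by ring
          linarith
        have expand : (f.eval x - ε*h.eval x)^2
            = (f.eval x)^2 - 2*(ε*(f.eval x*h.eval x)) + ε^2*(h.eval x)^2 := by ring
        rw [expand]
        linarith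
    have hfinal1 : M ≤ supOn n r' := hpmin' r' hr'd hr'0
    have hfinal2 : supOn n r' ≤ M' := supOn_le n hn1 r' key
    linarith
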